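/- arXiv:2308.13583 — 4 statements merged into one kernel-verified Lean document; each statement's English description precedes it below -/
import Mathlib

section
/- For positive integers n and N and any complex number a, the terminating hypergeometric sum identity holds: (-N+1)_{n+N} · ∑_{k=0}^{n+N} [(-n-N)_k (a)_k / ((-N+1)_k k!)] x^k = (N+1)_n · (-N+1)_N · (∑_{k=0}^{N} [(-N)_k (a)_k / ((-N+1)_k k!)] x^k) · (∑_{k=0}^{n} [(-n)_k (a+N)_k / ((N+1)_k k!)] x^k), where (q)_k denotes the Pochhammer symbol and in each sum the index k is restricted so that (-N+1)_k ≠ 0 issues are handled by interpreting the ratio (-n-N)_k(a)_k/(-N+1)_k as the polynomial coefficient obtained after multiplying through by (-N+1)_{n+N} (i.e., all terms are well-defined after the stated multiplication). -/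
open Polynomial Finset

/-- Pochhammer (shifted factorial) symbol `(a)_k = a(a+1)⋯(a+k-1)`. -/
noncomputable def poch (a : ℂ) (k : ℕ) : ℂ := (ascPochhammer ℂ k).eval a

lemma poch_neg_nat (m k : ℕ) :
    poch (-(m : ℂ)) k = (-1) ^ k * (m.descFactorial k : ℂ) := by
  rw [poch, ascPochhammer_eval_neg_eq_descPochhammer,
    descPochhammer_eval_eq_descFactorial]

lemma poch_nat (m k : ℕ) : poch (m : ℂ) k = (m.ascFactorial k : ℂ) := by
  rw [poch, ← ascPochhammer_eval_cast, ascPochhammer_nat_eq_ascFactorial]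

lemma poch_add (a : ℂ) (m k : ℕ) : poch a (m + k) = poch a m * poch (a + m) k := by
  have h := congrArg (Polynomial.eval a) (ascPochhammer_mul (S := ℂ) m k)
  simp only [eval_mul, eval_comp, eval_add, eval_X, eval_natCast] at h
  rw [poch, poch, poch, ← h]

lemma poch_zero_of_neg (m k : ℕ) (h : m < k) : poch (-(m : ℂ)) k = 0 :=
  ascPochhammer_eval_neg_coe_nat_of_lt h

/-- Lemma 3.1 (Factorization): the termwise-regularized identity
`(-N+1)_{n+N} ₂F₁(-n-N, a; -N+1; x)
  = (N+1)_n (-N+1)_N ₂F₁(-N, a; -N+1; x) ₂F₁(-n, a+N; N+1; x)`,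
where each expression `(-N+1)_M ₂F₁(-M', a; -N+1; x)` is interpreted termwise via
the well-defined coefficients `(-M')_k (a)_k (-N+1+k)_{M-k} / k!`. -/
theorem bigF_factorization (n N : ℕ) (hn : 1 ≤ n) (hN : 1 ≤ N) (a x : ℂ) :
    ∑ k ∈ Finset.range (n + N + 1),
      poch (-(n : ℂ) - N) k * poch a k * poch (-(N : ℂ) + 1 + k) (n + N - k)
        / (k.factorial : ℂ) * x ^ k
    = poch ((N : ℂ) + 1) n
      * (∑ k ∈ Finset.range (N + 1),
          poch (-(N : ℂ)) k * poch a k * poch (-(N : ℂ) + 1 + k) (N - k)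
            / (k.factorial : ℂ) * x ^ k)
      * (∑ k ∈ Finset.range (n + 1),
          poch (-(n : ℂ)) k * poch (a + N) k
            / (poch ((N : ℂ) + 1) k * (k.factorial : ℂ)) * x ^ k) := by
  -- vanishing helper
  have hvanish : ∀ (M k : ℕ), k < N → N ≤ M →
      poch (-(N : ℂ) + 1 + k) (M - k) = 0 := by
    intro M k hk hM
    have harg : -(N : ℂ) + 1 + k = -((N - 1 - k : ℕ) : ℂ) := by
      have h1 : ((N - 1 - k : ℕ) : ℂ) = (N : ℂ) - 1 - k := by
        push_cast [Nat.cast_sub (by omega : k ≤ N - 1), Nat.cast_sub (by omega : 1 ≤ N)]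
        ring
      rw [h1]; ring
    rw [harg]
    exact poch_zero_of_neg _ _ (by omega)
  -- the middle sum collapses to its top term
  have hmid : (∑ k ∈ Finset.range (N + 1),
      poch (-(N : ℂ)) k * poch a k * poch (-(N : ℂ) + 1 + k) (N - k)
        / (k.factorial : ℂ) * x ^ k)
      = poch (-(N : ℂ)) N * poch a N / (N.factorial : ℂ) * x ^ N := by
    rw [Finset.sum_eq_single_of_mem N (Finset.self_mem_range_succ N)]
    · have : poch (-(N : ℂ) + 1 + N) (N - N) = 1 := by
        simp [poch]
      rw [this, mul_one]
    · intro k hk hkN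
      have hk' : k < N := by
        simp only [Finset.mem_range] at hk; omega
      rw [hvanish N k hk' le_rfl]
      simp
  rw [hmid]
  -- split the LHS sum
  have hsplit : n + N + 1 = N + (n + 1) := by omega
  rw [hsplit, Finset.sum_range_add]
  have hzero : (∑ k ∈ Finset.range N,
      poch (-(n : ℂ) - N) k * poch a k * poch (-(N : ℂ) + 1 + k) (n + N - k)
        / (k.factorial : ℂ) * x ^ k) = 0 := by
    apply Finset.sum_eq_zero
    intro k hk
    rw [hvanish (n + N) k (Finset.mem_range.mp hk) (by omega)]
    simp
  rw [hzero, zero_add, Finset.mul_sum]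
  apply Finset.sum_congr rfl
  intro j hj
  have hjn : j ≤ n := by simpa [Nat.lt_succ_iff] using hj
  -- nonzeroness facts
  have hfNj : ((N + j).factorial : ℂ) ≠ 0 := by exact_mod_cast (N + j).factorial_ne_zero
  have hfj : (j.factorial : ℂ) ≠ 0 := by exact_mod_cast j.factorial_ne_zero
  have hfN : (N.factorial : ℂ) ≠ 0 := by exact_mod_cast N.factorial_ne_zero
  have hfnj : ((n - j).factorial : ℂ) ≠ 0 := by exact_mod_cast (n - j).factorial_ne_zero
  have hfn : (n.factorial : ℂ) ≠ 0 := by exact_mod_cast n.factorial_ne_zero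
  have hfnN : ((n + N).factorial : ℂ) ≠ 0 := by exact_mod_cast (n + N).factorial_ne_zero
  -- rewrite all pochhammers as factorial data
  have e1 : poch (-(n : ℂ) - N) (N + j) = (-1) ^ (N + j) * (((n + N).factorial : ℂ)
      / ((n - j).factorial : ℂ)) := by
    have harg : -(n : ℂ) - N = -((n + N : ℕ) : ℂ) := by push_cast; ring
    rw [harg, poch_neg_nat]
    congr 1
    have h0 := Nat.factorial_mul_descFactorial (show N + j ≤ n + N by omega)
    have h2 : (n + N) - (N + j) = n - j := by omega
    rw [h2] at h0
    have hc : ((n - j).factorial : ℂ) * ((n + N).descFactorial (N + j) : ℂ)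
        = ((n + N).factorial : ℂ) := by exact_mod_cast h0
    have hfnj : ((n - j).factorial : ℂ) ≠ 0 := by exact_mod_cast (n - j).factorial_ne_zero
    field_simp [← hc]
    linear_combination hc
  have e2 : poch a (N + j) = poch a N * poch (a + N) j := poch_add a N j
  have e3 : poch (-(N : ℂ) + 1 + ((N + j : ℕ) : ℂ)) (n + N - (N + j))
      = (n.factorial : ℂ) / (j.factorial : ℂ) := by
    have harg : -(N : ℂ) + 1 + ((N + j : ℕ) : ℂ) = ((j + 1 : ℕ) : ℂ) := by push_cast; ring
    have hcnt : n + N - (N + j) = n - j := by omega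
    rw [harg, hcnt, poch_nat]
    have := Nat.factorial_mul_ascFactorial j (n - j)
    rw [show j + (n - j) = n by omega] at this
    have hc : (j.factorial : ℂ) * ((j + 1).ascFactorial (n - j) : ℂ) = (n.factorial : ℂ) := by
      exact_mod_cast this
    field_simp [← hc]
    linear_combination hc
  have e4 : poch ((N : ℂ) + 1) n = ((n + N).factorial : ℂ) / (N.factorial : ℂ) := by
    have harg : (N : ℂ) + 1 = ((N + 1 : ℕ) : ℂ) := by push_cast; ring
    rw [harg, poch_nat]
    have := Nat.factorial_mul_ascFactorial N n
    have hc : (N.factorial : ℂ) * ((N + 1).ascFactorial n : ℂ) = ((N + n).factorial : ℂ) := by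
      exact_mod_cast this
    rw [show n + N = N + n by omega]
    field_simp [← hc]
    linear_combination hc
  have e5 : poch (-(N : ℂ)) N = (-1) ^ N * (N.factorial : ℂ) := by
    rw [poch_neg_nat, Nat.descFactorial_self]
  have e6 : poch (-(n : ℂ)) j = (-1) ^ j * ((n.factorial : ℂ) / ((n - j).factorial : ℂ)) := by
    rw [poch_neg_nat]
    congr 1
    have := Nat.factorial_mul_descFactorial hjn
    have hc : ((n - j).factorial : ℂ) * (n.descFactorial j : ℂ) = (n.factorial : ℂ) := by
      exact_mod_cast this
    field_simp [← hc]
    linear_combination hc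
  have e7 : poch ((N : ℂ) + 1) j = ((N + j).factorial : ℂ) / (N.factorial : ℂ) := by
    have harg : (N : ℂ) + 1 = ((N + 1 : ℕ) : ℂ) := by push_cast; ring
    rw [harg, poch_nat]
    have := Nat.factorial_mul_ascFactorial N j
    have hc : (N.factorial : ℂ) * ((N + 1).ascFactorial j : ℂ) = ((N + j).factorial : ℂ) := by
      exact_mod_cast this
    field_simp [← hc]
    linear_combination hc
  rw [e1, e2, e3, e4, e5, e6, e7]
  have hx : x ^ (N + j) = x ^ N * x ^ j := pow_add x N j
  rw [hx]
  field_simp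
  ring
end

section
/- For nonnegative integers n, N with n ≥ 1, any complex a, and complex x: ∑_{k=0}^{n+N} [(-n-N)_k (a)_k (-N+1+k)_{n+N-k} / k!] x^k = (N+1)_n (a)_N (-x)^N ∑_{k=0}^{n} [(-n)_k (a+N)_k / ((N+1)_k k!)] x^k. In particular, the left-hand polynomial is divisible by x^N. -/
open Polynomial Finset

lemma poch_zero (a : ℂ) : poch a 0 = 1 := by simp [poch]

lemma poch_succ (a : ℂ) (k : ℕ) : poch a (k + 1) = poch a k * (a + k) := by
  simpa [poch] using ascPochhammer_succ_eval k a

lemma poch_prod (a : ℂ) (m : ℕ) : poch a m = ∏ i ∈ Finset.range m, (a + i) := by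
  induction m with
  | zero => simp [poch_zero]
  | succ m ih => rw [poch_succ, ih, Finset.prod_range_succ]

lemma poch_nat_s2 (c m : ℕ) :
    poch ((c : ℂ) + 1) m * (c.factorial : ℂ) = ((c + m).factorial : ℂ) := by
  induction m with
  | zero => simp [poch_zero]
  | succ m ih =>
    rw [poch_succ, ← Nat.add_assoc, Nat.factorial_succ]
    push_cast
    rw [mul_right_comm, ih]
    ring

lemma poch_neg (m j : ℕ) (h : j ≤ m) :
    poch (-(m : ℂ)) j * ((m - j).factorial : ℂ) = (-1) ^ j * (m.factorial : ℂ) := by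
  induction j with
  | zero => simp [poch_zero]
  | succ j ih =>
    have hj : j ≤ m := Nat.le_of_succ_le h
    have h1 : m - j = (m - (j + 1)) + 1 := by omega
    have := ih hj
    rw [h1, Nat.factorial_succ] at this
    rw [poch_succ]
    have hc : -(m : ℂ) + j = -((m - (j+1) : ℕ) + 1 : ℂ) := by
      have : ((m - (j+1) : ℕ) : ℂ) = (m : ℂ) - (j + 1 : ℂ) := by
        push_cast [Nat.cast_sub h]; ring
      rw [this]; ring
    rw [hc]
    push_cast at this ⊢
    linear_combination -this

lemma poch_ne (N j : ℕ) : poch ((N : ℂ) + 1) j ≠ 0 := by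
  intro h
  have := poch_nat_s2 N j
  rw [h, zero_mul] at this
  exact (Nat.cast_ne_zero.mpr (N + j).factorial_ne_zero) this.symm

lemma fact_ne (m : ℕ) : ((m.factorial : ℂ)) ≠ 0 :=
  Nat.cast_ne_zero.mpr m.factorial_ne_zero

/-- The termwise-regularized product `(-N+1)_{n+N} ₂F₁(-n-N, a; -N+1; x)` equals
`(N+1)_n (a)_N (-x)^N ₂F₁(-n, a+N; N+1; x)`; in particular it is divisible by `x^N`. -/
theorem regularized_2F1_factorization (n N : ℕ) (hn : 1 ≤ n) (a x : ℂ) :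
    ∑ k ∈ Finset.range (n + N + 1),
      poch (-(n : ℂ) - N) k * poch a k * poch (-(N : ℂ) + 1 + k) (n + N - k)
        / (k.factorial : ℂ) * x ^ k
    = poch ((N : ℂ) + 1) n * poch a N * (-x) ^ N
      * ∑ k ∈ Finset.range (n + 1),
          poch (-(n : ℂ)) k * poch (a + N) k
            / (poch ((N : ℂ) + 1) k * (k.factorial : ℂ)) * x ^ k := by
  have hvanish : ∀ k < N, poch (-(N : ℂ) + 1 + k) (n + N - k) = 0 := by
    intro k hk
    rw [poch_prod]
    apply Finset.prod_eq_zero (i := N - 1 - k)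
    · exact Finset.mem_range.mpr (by omega)
    · have : ((N - 1 - k : ℕ) : ℂ) = (N : ℂ) - 1 - k := by
        rw [show N - 1 - k = N - (1 + k) from by omega, Nat.cast_sub (by omega)]
        push_cast; ring
      rw [this]; ring
  rw [Finset.range_eq_Ico,
    ← Finset.sum_Ico_consecutive _ (Nat.zero_le N) (by omega : N ≤ n + N + 1)]
  have h0 : ∑ k ∈ Finset.Ico 0 N,
      poch (-(n : ℂ) - N) k * poch a k * poch (-(N : ℂ) + 1 + k) (n + N - k)
        / (k.factorial : ℂ) * x ^ k = 0 := by
    apply Finset.sum_eq_zero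
    intro k hk
    rw [hvanish k (Finset.mem_Ico.mp hk).2]
    ring
  rw [h0, zero_add, Finset.sum_Ico_eq_sum_range]
  have hcard : n + N + 1 - N = n + 1 := by omega
  rw [hcard, Finset.mul_sum]
  apply Finset.sum_congr rfl
  intro j hj
  have hjn : j ≤ n := Nat.lt_succ_iff.mp (Finset.mem_range.mp hj)
  -- rewrite the three pochhammers at N + j
  have hb : (-(n : ℂ) - N) = -(((n + N : ℕ) : ℂ)) := by push_cast; ring
  have hb2 : -(((n + N : ℕ) : ℂ)) + (N : ℕ) = -(n : ℂ) := by push_cast; ring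
  have e1 : poch (-(n : ℂ) - N) (N + j)
      = poch (-(((n + N : ℕ) : ℂ))) N * poch (-(n : ℂ)) j := by
    rw [hb, poch_add, hb2]
  have e2 : poch a (N + j) = poch a N * poch (a + N) j := by
    rw [poch_add]
  have e3arg : -(N : ℂ) + 1 + ((N + j : ℕ) : ℂ) = (j : ℂ) + 1 := by push_cast; ring
  have e3idx : n + N - (N + j) = n - j := by omega
  have hP1 : poch (-(((n + N : ℕ) : ℂ))) N
      = (-1) ^ N * (((n + N).factorial : ℂ)) / (n.factorial : ℂ) := by
    rw [eq_div_iff (fact_ne n)]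
    have := poch_neg (n + N) N (by omega)
    rwa [show n + N - N = n by omega] at this
  have hC : poch ((j : ℂ) + 1) (n - j) = (n.factorial : ℂ) / (j.factorial : ℂ) := by
    rw [eq_div_iff (fact_ne j)]
    have := poch_nat_s2 j (n - j)
    rwa [show j + (n - j) = n by omega] at this
  have hDn : poch ((N : ℂ) + 1) n = (((n + N).factorial : ℂ)) / (N.factorial : ℂ) := by
    rw [eq_div_iff (fact_ne N)]
    have := poch_nat_s2 N n
    rwa [show N + n = n + N by omega] at this
  have hDj : poch ((N : ℂ) + 1) j = (((N + j).factorial : ℂ)) / (N.factorial : ℂ) := by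
    rw [eq_div_iff (fact_ne N)]
    exact poch_nat_s2 N j
  rw [e1, e2, e3arg, e3idx, hP1, hC, hDn, hDj, pow_add]
  have hx : (-x) ^ N = (-1) ^ N * x ^ N := by rw [neg_pow]
  rw [hx]
  field_simp [fact_ne n, fact_ne j, fact_ne N, fact_ne (N + j)]
end

section
/- Let N be a positive integer, α, c ∈ ℂ with c ≠ ±1, and suppose all denominators below are nonzero. With b_n and u_n the recurrence coefficients of the big -1 Jacobi polynomials, one has for all n ≥ 0: b_{n+2N+1}(α, -2N-1, c) = b_n(α, 2N+1, -c), and for all n ≥ 1: u_{n+2N+1}(α, -2N-1, c) = u_n(α, 2N+1, -c). -/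
open Polynomial Finset

/-- Diagonal recurrence coefficient `b_n(α,β,c)` of the monic big `-1` Jacobi polynomials. -/
noncomputable def bcoef (α β c : ℂ) (n : ℕ) : ℂ :=
  if Even n then
    -c + (c - 1) * n / (α + β + 2 * n) + (c + 1) * (β + n + 1) / (α + β + 2 * n + 2)
  else
    c - (c - 1) * (n + 1) / (α + β + 2 * n + 2) - (c + 1) * (β + n) / (α + β + 2 * n)

/-- Subdiagonal recurrence coefficient `u_n(α,β,c)` of the monic big `-1` Jacobi polynomials. -/
noncomputable def ucoef (α β c : ℂ) (n : ℕ) : ℂ :=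
  if Even n then (c - 1) ^ 2 * n * (α + β + n) / (α + β + 2 * n) ^ 2
  else (c + 1) ^ 2 * (α + n) * (β + n) / (α + β + 2 * n) ^ 2

/-- Monic big `-1` Jacobi polynomials: `Q₀ = 1`, `Q_{n+1} = (X - b_n) Q_n - u_n Q_{n-1}`. -/
noncomputable def bigQ (α β c : ℂ) : ℕ → Polynomial ℂ
  | 0 => 1
  | 1 => X - C (bcoef α β c 0)
  | (n + 2) => (X - C (bcoef α β c (n + 1))) * bigQ α β c (n + 1)
      - C (ucoef α β c (n + 1)) * bigQ α β c n

/-- Shift identities for the recurrence coefficients when `β = -2N-1`: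
`b_{n+2N+1}(α, -2N-1, c) = b_n(α, 2N+1, -c)` for `n ≥ 0` and
`u_{n+2N+1}(α, -2N-1, c) = u_n(α, 2N+1, -c)` for `n ≥ 1`. -/
theorem coef_shift_beta (N : ℕ) (hN : 1 ≤ N) (α c : ℂ)
    (hc1 : c ≠ 1) (hc2 : c ≠ -1)
    (hden : ∀ m : ℕ, α + (2 * (N : ℂ) + 1) + 2 * m ≠ 0) :
    (∀ n : ℕ, bcoef α (-2 * (N : ℂ) - 1) c (n + 2 * N + 1)
      = bcoef α (2 * (N : ℂ) + 1) (-c) n) ∧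
    (∀ n : ℕ, 1 ≤ n → ucoef α (-2 * (N : ℂ) - 1) c (n + 2 * N + 1)
      = ucoef α (2 * (N : ℂ) + 1) (-c) n) := by
  have key : ∀ n : ℕ, (α + (2 * (N : ℂ) + 1) + 2 * n ≠ 0)
      ∧ (α + (2 * (N : ℂ) + 1) + 2 * n + 2 ≠ 0) := by
    intro n
    refine ⟨hden n, fun he => hden (n + 1) ?_⟩
    push_cast
    linear_combination he
  constructor
  · intro n
    obtain ⟨hD, hD2⟩ := key n
    rcases Nat.even_or_odd n with he | ho
    · have h1 : ¬ Even (n + 2 * N + 1) := by simp [Nat.even_add_one, Nat.even_add, he]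
      rw [bcoef, bcoef, if_neg h1, if_pos he]
      push_cast
      ring
    · have h1 : Even (n + 2 * N + 1) := by
        simp [Nat.even_add_one, Nat.even_add, Nat.not_even_iff_odd.mpr ho]
      rw [bcoef, bcoef, if_pos h1, if_neg (Nat.not_even_iff_odd.mpr ho)]
      push_cast
      ring
  · intro n _
    obtain ⟨hD, _⟩ := key n
    rcases Nat.even_or_odd n with he | ho
    · have h1 : ¬ Even (n + 2 * N + 1) := by simp [Nat.even_add_one, Nat.even_add, he]
      rw [ucoef, ucoef, if_neg h1, if_pos he]
      push_cast
      ring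
    · have h1 : Even (n + 2 * N + 1) := by
        simp [Nat.even_add_one, Nat.even_add, Nat.not_even_iff_odd.mpr ho]
      rw [ucoef, ucoef, if_pos h1, if_neg (Nat.not_even_iff_odd.mpr ho)]
      push_cast
      ring
end

section
/- Let (Q_n) be a sequence of monic polynomials satisfying Q_{-1} = 0, Q_0 = 1, and x Q_n = Q_{n+1} + b_n Q_n + u_n Q_{n-1} with complex coefficients b_n, u_n, and suppose u_k ≠ 0 for 1 ≤ k ≤ M. Then there exists a (unique, normalized by L(1) = 1) linear functional L on polynomials such that L(Q_n Q_m) = 0 for all n ≠ m with n, m ≤ M, and L(Q_n²) = u_1 u_2 ··· u_n ≠ 0 for n ≤ M. -/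
open Polynomial Finset

noncomputable def favMoments (Q : ℕ → Polynomial ℂ) : ℕ → ℂ
  | 0 => 1
  | (k+1) => -∑ j ∈ (Finset.range (k+1)).attach,
      (Q (k+1)).coeff j * favMoments Q j
  decreasing_by exact Finset.mem_range.mp j.2

noncomputable def favL (Q : ℕ → Polynomial ℂ) : Polynomial ℂ →ₗ[ℂ] ℂ :=
  Polynomial.lsum fun k => LinearMap.toSpanSingleton ℂ ℂ (favMoments Q k)

lemma favL_apply (Q : ℕ → Polynomial ℂ) (p : Polynomial ℂ) :
    favL Q p = ∑ k ∈ Finset.range (p.natDegree + 1), p.coeff k * favMoments Q k := by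
  rw [favL, lsum_apply]
  rw [Polynomial.sum_over_range' _ (by simp) _ (Nat.lt_succ_self _)]
  simp [LinearMap.toSpanSingleton_apply, smul_eq_mul]

/-- Truncated Favard theorem: if `(Q_n)` are monic polynomials with `Q₀ = 1`,
`Q₁ = X - b₀`, satisfying the three-term recurrence
`X Q_{n+1} = Q_{n+2} + b_{n+1} Q_{n+1} + u_{n+1} Q_n`, and `u_k ≠ 0` for `1 ≤ k ≤ M`,
then there is a linear functional `L` with `L 1 = 1`, orthogonalizing the `Q_n` with
`n, m ≤ M`, with `L(Q_n²) = u₁ ⋯ u_n ≠ 0` for `n ≤ M`. -/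
theorem truncated_favard (b u : ℕ → ℂ) (M : ℕ)
    (Q : ℕ → Polynomial ℂ)
    (hmonic : ∀ n, (Q n).Monic)
    (hQ0 : Q 0 = 1)
    (hQ1 : Q 1 = X - C (b 0))
    (hrec : ∀ n : ℕ,
      X * Q (n + 1) = Q (n + 2) + C (b (n + 1)) * Q (n + 1) + C (u (n + 1)) * Q n)
    (hu : ∀ k, 1 ≤ k → k ≤ M → u k ≠ 0) :
    ∃ L : Polynomial ℂ →ₗ[ℂ] ℂ, L 1 = 1 ∧
      (∀ n m : ℕ, n ≤ M → m ≤ M → n ≠ m → L (Q n * Q m) = 0) ∧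
      (∀ n : ℕ, n ≤ M →
        L (Q n * Q n) = ∏ k ∈ Finset.Icc 1 n, u k ∧ L (Q n * Q n) ≠ 0) := by
  set L := favL Q with hL
  -- degrees
  have hdeg : ∀ n, (Q n).natDegree = n := by
    intro n
    induction n using Nat.strong_induction_on with
    | _ n ih =>
      match n with
      | 0 => rw [hQ0]; simp
      | 1 => rw [hQ1]; simp [natDegree_X_sub_C]
      | (k+2) =>
        have hk1 : (Q (k+1)).natDegree = k+1 := ih (k+1) (by omega)
        have hk : (Q k).natDegree = k := ih k (by omega)
        have hQeq : Q (k+2) = X * Q (k+1) - (C (b (k+1)) * Q (k+1) + C (u (k+1)) * Q k) := by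
          have := hrec k
          linear_combination -this
        have h1 : (X * Q (k+1)).natDegree = k + 2 := by
          rw [natDegree_mul X_ne_zero (hmonic (k+1)).ne_zero, natDegree_X, hk1]
          omega
        have h2 : (C (b (k+1)) * Q (k+1) + C (u (k+1)) * Q k).natDegree < k + 2 := by
          apply lt_of_le_of_lt (natDegree_add_le _ _)
          have a1 := natDegree_C_mul_le (b (k+1)) (Q (k+1))
          have a2 := natDegree_C_mul_le (u (k+1)) (Q k)
          omega
        rw [hQeq, natDegree_sub_eq_left_of_natDegree_lt (by omega), h1]
  -- L of Q n
  have hLQ : ∀ n, L (Q n) = if n = 0 then 1 else 0 := by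
    intro n
    match n with
    | 0 => rw [hL, favL_apply, hQ0]; simp [favMoments]
    | (k+1) =>
      rw [hL, favL_apply, hdeg, Finset.sum_range_succ]
      have hc : (Q (k+1)).coeff (k+1) = 1 := by
        have := (hmonic (k+1)).leadingCoeff
        rwa [leadingCoeff, hdeg] at this
      rw [hc, one_mul]
      have hm : favMoments Q (k+1)
          = -∑ j ∈ Finset.range (k+1), (Q (k+1)).coeff j * favMoments Q j := by
        rw [favMoments]
        congr 1
        exact Finset.sum_attach (Finset.range (k+1)) (fun j => (Q (k+1)).coeff j * favMoments Q j)
      rw [hm]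
      simp
  have hL1 : L 1 = 1 := by
    have := hLQ 0
    rwa [hQ0, if_pos rfl] at this
  -- key computation
  have key : ∀ k n : ℕ, (k < n → L (X^k * Q n) = 0) ∧
      (k = n → L (X^k * Q n) = ∏ j ∈ Finset.Icc 1 n, u j) := by
    intro k
    induction k with
    | zero =>
      intro n
      constructor
      · intro hn
        rw [pow_zero, one_mul, hLQ, if_neg (by omega)]
      · intro h
        subst h
        rw [pow_zero, one_mul, hLQ, if_pos rfl]
        simp
    | succ k ih =>
      intro n
      match n with
      | 0 => exact ⟨by omega, by omega⟩
      | (j+1) =>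
        have hx : X^(k+1) * Q (j+1)
            = X^k * Q (j+2) + b (j+1) • (X^k * Q (j+1)) + u (j+1) • (X^k * Q j) := by
          have h1 : X^(k+1) * Q (j+1) = X^k * (X * Q (j+1)) := by ring
          rw [h1, hrec j, smul_eq_C_mul, smul_eq_C_mul]
          ring
        have expand : L (X^(k+1) * Q (j+1))
            = L (X^k * Q (j+2)) + b (j+1) * L (X^k * Q (j+1)) + u (j+1) * L (X^k * Q j) := by
          rw [hx, map_add, map_add, map_smul, map_smul, smul_eq_mul, smul_eq_mul]
        constructor
        · intro hn
          rw [expand, (ih (j+2)).1 (by omega), (ih (j+1)).1 (by omega), (ih j).1 (by omega)]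
          ring
        · intro hn
          have hkj : k = j := by omega
          rw [expand, (ih (j+2)).1 (by omega), (ih (j+1)).1 (by omega),
            (ih j).2 hkj, Finset.prod_Icc_succ_top (by omega : 1 ≤ j + 1)]
          ring
  -- expansion of products
  have hQL : ∀ m n : ℕ, L (Q m * Q n)
      = ∑ i ∈ Finset.range (m+1), (Q m).coeff i * L (X^i * Q n) := by
    intro m n
    have hrepr : Q m * Q n = ∑ i ∈ Finset.range (m+1), (Q m).coeff i • (X^i * Q n) := by
      conv_lhs => rw [(Q m).as_sum_range' (m+1) (by rw [hdeg]; omega)]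
      rw [Finset.sum_mul]
      refine Finset.sum_congr rfl fun i _ => ?_
      rw [smul_eq_C_mul, ← C_mul_X_pow_eq_monomial]
      ring
    rw [hrepr, map_sum]
    simp [smul_eq_mul]
  have horth : ∀ m n : ℕ, m < n → L (Q m * Q n) = 0 := by
    intro m n hmn
    rw [hQL]
    refine Finset.sum_eq_zero fun i hi => ?_
    rw [(key i n).1 (by simp at hi; omega), mul_zero]
  have hdiag : ∀ n : ℕ, L (Q n * Q n) = ∏ j ∈ Finset.Icc 1 n, u j := by
    intro n
    rw [hQL, Finset.sum_range_succ]
    have hc : (Q n).coeff n = 1 := by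
      have := (hmonic n).leadingCoeff
      rwa [leadingCoeff, hdeg] at this
    rw [hc, one_mul, (key n n).2 rfl]
    rw [Finset.sum_eq_zero fun i hi => by
      rw [(key i n).1 (by simp at hi; omega), mul_zero]]
    ring
  refine ⟨L, hL1, ?_, ?_⟩
  · intro n m _ _ hnm
    rcases lt_or_gt_of_ne hnm with h | h
    · exact horth n m h
    · rw [mul_comm]; exact horth m n h
  · intro n hn
    refine ⟨hdiag n, ?_⟩
    rw [hdiag n]
    exact Finset.prod_ne_zero_iff.mpr fun k hk => by
      simp only [Finset.mem_Icc] at hk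
      exact hu k hk.1 (le_trans hk.2 hn)
end
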